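/- Suppose t > 0, k is locally integrable on ℝ²ⁿ, k(x,y) = Σ_{|α| ≤ N} M_α(x)·(x−y)^α·p_t(x,y) pointwise for locally integrable functions M_α, and |k(x,y)| ≤ p_t(x,y) for almost all x, y, where p_t(x,y) = t^{-n/2}exp(-π|x−y|²/t). Then M_α = 0 a.e. for all α with |α| ≥ 1, and |M_0(x)| ≤ 1 for almost all x. -/

import Mathlib

open Real MeasureTheory
open Filter

/-- The heat kernel `p_t (x, y) = t^{-n/2} exp (-π ‖x - y‖² / t)`. -/
noncomputable def heatKernel {n : ℕ} (t : ℝ) (x y : EuclideanSpace ℝ (Fin n)) : ℝ :=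
  t ^ (-(n : ℝ) / 2) * Real.exp (-π * ‖x - y‖ ^ 2 / t)


lemma real_poly_bdd (m : ℕ) (a : ℕ → ℝ)
    (h : ∀ s : ℝ, |∑ d ∈ Finset.range m, a d * s ^ d| ≤ 1) :
    ∀ d, 1 ≤ d → d < m → a d = 0 := by
  intro d hd hdm
  set p : Polynomial ℝ := ∑ e ∈ Finset.range m, Polynomial.monomial e (a e) with hp
  have heval : ∀ s : ℝ, p.eval s = ∑ e ∈ Finset.range m, a e * s ^ e := by
    intro s
    simp [hp, Polynomial.eval_finset_sum, Polynomial.eval_monomial]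
  have hbdd : IsBoundedUnder (· ≤ ·) atTop fun x => |p.eval x| := by
    refine ⟨1, eventually_map.mpr (Eventually.of_forall fun x => ?_)⟩
    rw [heval x]; exact h x
  have hdeg : p.degree ≤ 0 := (Polynomial.abs_isBoundedUnder_iff p).mp hbdd
  have hcoeff : p.coeff d = a d := by
    simp [hp, Polynomial.finset_sum_coeff, Polynomial.coeff_monomial,
      Finset.sum_ite_eq, Finset.mem_range.mpr hdm]
  rw [← hcoeff]
  exact Polynomial.coeff_eq_zero_of_degree_lt
    (lt_of_le_of_lt hdeg (by exact_mod_cast Nat.pos_of_ne_zero (by omega)))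

lemma cplx_poly_bdd (m : ℕ) (a : ℕ → ℂ)
    (h : ∀ s : ℝ, ‖∑ d ∈ Finset.range m, a d * (s : ℂ) ^ d‖ ≤ 1) :
    ∀ d, 1 ≤ d → d < m → a d = 0 := by
  have hre : ∀ s : ℝ, (∑ d ∈ Finset.range m, a d * (s : ℂ) ^ d).re
      = ∑ d ∈ Finset.range m, (a d).re * s ^ d := by
    intro s
    rw [Complex.re_sum]
    refine Finset.sum_congr rfl fun d _ => ?_
    simp [Complex.mul_re, ← Complex.ofReal_pow]
  have him : ∀ s : ℝ, (∑ d ∈ Finset.range m, a d * (s : ℂ) ^ d).im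
      = ∑ d ∈ Finset.range m, (a d).im * s ^ d := by
    intro s
    rw [Complex.im_sum]
    refine Finset.sum_congr rfl fun d _ => ?_
    simp [Complex.mul_im, ← Complex.ofReal_pow]
  intro d hd hdm
  have h1 := real_poly_bdd m (fun d => (a d).re) (fun s => by
    rw [← hre s]; exact (Complex.abs_re_le_norm _).trans (h s)) d hd hdm
  have h2 := real_poly_bdd m (fun d => (a d).im) (fun s => by
    rw [← him s]; exact (Complex.abs_im_le_norm _).trans (h s)) d hd hdm
  exact Complex.ext h1 h2


lemma mv_vanish {n : ℕ} {ι : Type*} [DecidableEq ι] (T : Finset ι) (e : ι → Fin n → ℕ)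
    (he : ∀ β ∈ T, ∀ γ ∈ T, e β = e γ → β = γ) (r : ι → ℝ)
    (h : ∀ v : Fin n → ℝ, ∑ β ∈ T, r β * ∏ i, v i ^ e β i = 0) :
    ∀ β ∈ T, r β = 0 := by
  classical
  set P : MvPolynomial (Fin n) ℝ :=
    ∑ β ∈ T, MvPolynomial.monomial (Finsupp.equivFunOnFinite.symm (e β)) (r β) with hP
  have hPeval : ∀ v : Fin n → ℝ, MvPolynomial.eval v P = 0 := by
    intro v
    rw [hP, map_sum, ← h v]
    refine Finset.sum_congr rfl fun β _ => ?_
    rw [MvPolynomial.eval_monomial]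
    rw [Finsupp.prod_fintype _ _ (fun i => pow_zero _)]
    simp
  have hP0 : P = 0 := MvPolynomial.funext (fun v => by rw [hPeval v]; simp)
  intro β hβ
  have : MvPolynomial.coeff (Finsupp.equivFunOnFinite.symm (e β)) P = r β := by
    rw [hP, MvPolynomial.coeff_sum]
    rw [Finset.sum_eq_single_of_mem β hβ (fun γ hγ hne => by
      rw [MvPolynomial.coeff_monomial, if_neg]
      intro heq
      exact hne (he γ hγ β hβ (Finsupp.equivFunOnFinite.symm.injective heq)))]
    rw [MvPolynomial.coeff_monomial, if_pos rfl]
  rw [← this, hP0]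
  simp

lemma key_lemma {n N : ℕ} (c : (Fin n → Fin (N + 1)) → ℂ)
    (h : ∀ z : Fin n → ℝ,
      ‖∑ α ∈ Finset.univ.filter (fun α : Fin n → Fin (N + 1) => (∑ i, (α i : ℕ)) ≤ N),
        c α * ∏ i, ((z i : ℝ) : ℂ) ^ (α i : ℕ)‖ ≤ 1) :
    (∀ α : Fin n → Fin (N + 1), (∑ i, (α i : ℕ)) ≤ N → 1 ≤ ∑ i, (α i : ℕ) → c α = 0) ∧
      ‖c (fun _ => 0)‖ ≤ 1 := by
  classical
  set S : Finset (Fin n → Fin (N + 1)) :=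
    Finset.univ.filter (fun α : Fin n → Fin (N + 1) => (∑ i, (α i : ℕ)) ≤ N) with hS
  set b : (Fin n → ℝ) → ℕ → ℂ := fun v d =>
    ∑ α ∈ S.filter (fun α => (∑ i, (α i : ℕ)) = d), c α * ∏ i, ((v i : ℝ) : ℂ) ^ (α i : ℕ)
    with hb
  have hray : ∀ v : Fin n → ℝ, ∀ s : ℝ,
      (∑ α ∈ S, c α * ∏ i, ((s * v i : ℝ) : ℂ) ^ (α i : ℕ))
        = ∑ d ∈ Finset.range (N + 1), b v d * (s : ℂ) ^ d := by
    intro v s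
    have hmap : ∀ β ∈ S, (∑ i, (β i : ℕ)) ∈ Finset.range (N + 1) := fun β hβ => by
      rw [Finset.mem_range]
      have := (Finset.mem_filter.mp hβ).2
      omega
    rw [hb]
    simp only [Finset.sum_mul]
    rw [← Finset.sum_fiberwise_of_maps_to hmap
      (fun β => c β * ∏ i, ((s * v i : ℝ) : ℂ) ^ (β i : ℕ))]
    refine Finset.sum_congr rfl fun d _ => Finset.sum_congr rfl fun α hα => ?_
    have hd : (∑ i, (α i : ℕ)) = d := (Finset.mem_filter.mp hα).2
    push_cast
    rw [mul_assoc]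
    congr 1
    rw [← hd, ← Finset.prod_pow_eq_pow_sum, ← Finset.prod_mul_distrib]
    exact Finset.prod_congr rfl fun i _ => by rw [mul_pow, mul_comm]
  have hvanish : ∀ v : Fin n → ℝ, ∀ d, 1 ≤ d → d ≤ N → b v d = 0 := by
    intro v d h1 h2
    refine cplx_poly_bdd (N + 1) (b v) (fun s => ?_) d h1 (by omega)
    rw [← hray v s]
    exact h _
  have hzero_mem : (fun _ => (0 : Fin (N + 1))) ∈ S := by simp [hS]
  have hconst : ‖c (fun _ => 0)‖ ≤ 1 := by
    have h0 := h (fun _ => 0)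
    rw [Finset.sum_eq_single (fun _ => (0 : Fin (N + 1)))
      (fun β hβ hne => by
        obtain ⟨i, hi⟩ : ∃ i, β i ≠ 0 := by
          by_contra hc
          push_neg at hc
          exact hne (funext hc)
        have hz : ((0 : ℝ) : ℂ) ^ (β i : ℕ) = 0 := by
          rw [Complex.ofReal_zero, zero_pow]
          exact fun h0 => hi (by exact_mod_cast h0)
        rw [Finset.prod_eq_zero (Finset.mem_univ i) hz, mul_zero])
      (fun habs => absurd hzero_mem habs)] at h0
    simpa using h0
  refine ⟨?_, hconst⟩
  intro α hαN hα1
  have hαS : α ∈ S := by simp [hS, hαN]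
  set d := ∑ i, (α i : ℕ) with hd
  set T := S.filter (fun β : Fin n → Fin (N + 1) => (∑ i, (β i : ℕ)) = d) with hT
  have hmem : α ∈ T := by
    rw [hT, Finset.mem_filter]
    exact ⟨hαS, rfl⟩
  have hinj : ∀ β ∈ T, ∀ γ ∈ T, (fun i => (β i : ℕ)) = (fun i => (γ i : ℕ)) → β = γ := by
    intro β _ γ _ heq
    funext i
    exact Fin.ext (congrFun heq i)
  have hre0 : ∀ v : Fin n → ℝ, ∑ β ∈ T, (c β).re * ∏ i, v i ^ (β i : ℕ) = 0 := by
    intro v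
    have h0 : b v d = 0 := hvanish v d hα1 (hd ▸ hαN)
    have h1 : ∑ β ∈ T, (c β * ∏ i, ((v i : ℝ) : ℂ) ^ (β i : ℕ)).re = 0 := by
      rw [← Complex.re_sum,
        show (∑ β ∈ T, c β * ∏ i, ((v i : ℝ) : ℂ) ^ (β i : ℕ)) = b v d from rfl, h0,
        Complex.zero_re]
    refine Eq.trans (Finset.sum_congr rfl fun β _ => ?_) h1
    rw [show (∏ i, ((v i : ℝ) : ℂ) ^ (β i : ℕ)) = ((∏ i, v i ^ (β i : ℕ) : ℝ) : ℂ) by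
      push_cast; ring]
    rw [mul_comm (c β), Complex.re_ofReal_mul, mul_comm]
  have him0 : ∀ v : Fin n → ℝ, ∑ β ∈ T, (c β).im * ∏ i, v i ^ (β i : ℕ) = 0 := by
    intro v
    have h0 : b v d = 0 := hvanish v d hα1 (hd ▸ hαN)
    have h1 : ∑ β ∈ T, (c β * ∏ i, ((v i : ℝ) : ℂ) ^ (β i : ℕ)).im = 0 := by
      rw [← Complex.im_sum,
        show (∑ β ∈ T, c β * ∏ i, ((v i : ℝ) : ℂ) ^ (β i : ℕ)) = b v d from rfl, h0,
        Complex.zero_im]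
    refine Eq.trans (Finset.sum_congr rfl fun β _ => ?_) h1
    rw [show (∏ i, ((v i : ℝ) : ℂ) ^ (β i : ℕ)) = ((∏ i, v i ^ (β i : ℕ) : ℝ) : ℂ) by
      push_cast; ring]
    rw [mul_comm (c β), Complex.im_ofReal_mul, mul_comm]
  have h1 := mv_vanish T (fun β i => (β i : ℕ)) hinj (fun β => (c β).re) hre0 α hmem
  have h2 := mv_vanish T (fun β i => (β i : ℕ)) hinj (fun β => (c β).im) him0 α hmem
  exact Complex.ext h1 h2

/-- A pointwise Gaussian bound kills the nonconstant polynomial factors in the kernel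
expansion. -/
theorem gaussian_bound_kills_polynomial_part {n : ℕ} (t : ℝ) (ht : 0 < t) (N : ℕ)
    (k : EuclideanSpace ℝ (Fin n) × EuclideanSpace ℝ (Fin n) → ℂ)
    (hk : LocallyIntegrable k volume)
    (M : (Fin n → ℕ) → EuclideanSpace ℝ (Fin n) → ℂ)
    (hM : ∀ α : Fin n → ℕ, (∑ i, α i) ≤ N → LocallyIntegrable (M α) volume)
    (hrep : ∀ x y : EuclideanSpace ℝ (Fin n),
      k (x, y) = ∑ α ∈ Finset.univ.filter
          (fun α : Fin n → Fin (N + 1) => (∑ i, (α i : ℕ)) ≤ N),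
        M (fun i => (α i : ℕ)) x * (∏ i, ((x i - y i : ℝ) : ℂ) ^ (α i : ℕ)) *
          (heatKernel t x y : ℂ))
    (hbound : ∀ᵐ p : EuclideanSpace ℝ (Fin n) × EuclideanSpace ℝ (Fin n),
      ‖k p‖ ≤ heatKernel t p.1 p.2) :
    (∀ α : Fin n → ℕ, (∑ i, α i) ≤ N → 1 ≤ ∑ i, α i → ∀ᵐ x, M α x = 0) ∧
      ∀ᵐ x, ‖M (fun _ => 0) x‖ ≤ 1 := by
  classical
  have hae : ∀ᵐ x : EuclideanSpace ℝ (Fin n), ∀ᵐ y : EuclideanSpace ℝ (Fin n),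
      ‖k (x, y)‖ ≤ heatKernel t x y := by
    rw [MeasureTheory.Measure.volume_eq_prod] at hbound
    exact MeasureTheory.Measure.ae_ae_of_ae_prod hbound
  have hpos : ∀ x y : EuclideanSpace ℝ (Fin n), 0 < heatKernel t x y := fun x y =>
    mul_pos (Real.rpow_pos_of_pos ht _) (Real.exp_pos _)
  have main : ∀ᵐ x : EuclideanSpace ℝ (Fin n),
      (∀ α : Fin n → Fin (N + 1), (∑ i, (α i : ℕ)) ≤ N →
        1 ≤ ∑ i, (α i : ℕ) → M (fun i => (α i : ℕ)) x = 0) ∧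
      ‖M (fun _ => (0 : ℕ)) x‖ ≤ 1 := by
    filter_upwards [hae] with x hx
    set c : (Fin n → Fin (N + 1)) → ℂ := fun α => M (fun i => (α i : ℕ)) x with hc
    set g : EuclideanSpace ℝ (Fin n) → ℂ := fun y =>
      ∑ α ∈ Finset.univ.filter (fun α : Fin n → Fin (N + 1) => (∑ i, (α i : ℕ)) ≤ N),
        c α * ∏ i, ((x i - y i : ℝ) : ℂ) ^ (α i : ℕ) with hg
    have hgbd : ∀ᵐ y : EuclideanSpace ℝ (Fin n), ‖g y‖ ≤ 1 := by
      filter_upwards [hx] with y hy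
      rw [hrep x y, ← Finset.sum_mul, norm_mul, Complex.norm_real, Real.norm_eq_abs,
        abs_of_pos (hpos x y)] at hy
      refine le_of_mul_le_mul_right ?_ (hpos x y)
      rw [one_mul]
      exact hy
    have hgcont : Continuous g := by
      rw [hg]
      refine continuous_finset_sum _ fun α _ => Continuous.mul continuous_const
        (continuous_finset_prod _ fun i _ => Continuous.pow ?_ _)
      exact Complex.continuous_ofReal.comp
        (continuous_const.sub (EuclideanSpace.proj i).continuous)
    have hall : ∀ y : EuclideanSpace ℝ (Fin n), ‖g y‖ ≤ 1 := by
      have hclosed : IsClosed {y : EuclideanSpace ℝ (Fin n) | ‖g y‖ ≤ 1} :=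
        isClosed_le hgcont.norm continuous_const
      have hdense : Dense {y : EuclideanSpace ℝ (Fin n) | ‖g y‖ ≤ 1} :=
        MeasureTheory.Measure.dense_of_ae hgbd
      have huniv : {y : EuclideanSpace ℝ (Fin n) | ‖g y‖ ≤ 1} = Set.univ := by
        rw [← hclosed.closure_eq, hdense.closure_eq]
      exact fun y => Set.eq_univ_iff_forall.mp huniv y
    have hkey := key_lemma c (fun z => by
      have h2 := hall (x - WithLp.toLp 2 z)
      rw [hg] at h2
      refine le_trans (le_of_eq (congrArg norm (Finset.sum_congr rfl fun α _ => ?_))) h2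
      refine congrArg _ (Finset.prod_congr rfl fun i _ => ?_)
      have : x i - (x - WithLp.toLp 2 z) i = z i := by
        rw [PiLp.sub_apply, PiLp.toLp_apply]
        ring
      rw [this])
    exact ⟨hkey.1, hkey.2⟩
  constructor
  · intro α hαN hα1
    have hlt : ∀ i, α i < N + 1 := fun i => by
      have : α i ≤ ∑ j, α j :=
        Finset.single_le_sum (fun j _ => Nat.zero_le _) (Finset.mem_univ i)
      omega
    filter_upwards [main] with x hx
    have h1 : (∑ i, (((⟨α i, hlt i⟩ : Fin (N + 1)) : ℕ))) = ∑ i, α i := rfl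
    have := hx.1 (fun i => ⟨α i, hlt i⟩) (h1 ▸ hαN) (h1 ▸ hα1)
    exact this
  · filter_upwards [main] with x hx
    exact hx.2
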